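/- Let α ∈ ℤ₅ be the unique 5-adic root of X³ + 7X - 12 and set u = 14α - 19. Then u ≡ -1 (mod 25) but u ≢ -1 (mod 125); consequently u is a fifth power in ℤ₅ (there exists y ∈ ℤ₅ with y⁵ = u) but u is not a 25th power in ℤ₅ (there is no y ∈ ℤ₅ with y²⁵ = u). -/

import Mathlib

instance : Fact (Nat.Prime 5) := ⟨by norm_num⟩

set_option maxRecDepth 100000 in
theorem stmt_7 (α : ℤ_[5]) (hα : α ^ 3 + 7 * α - 12 = 0) :
    (25 : ℤ_[5]) ∣ (14 * α - 19 - (-1)) ∧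
    ¬ (125 : ℤ_[5]) ∣ (14 * α - 19 - (-1)) ∧
    (∃ y : ℤ_[5], y ^ 5 = 14 * α - 19) ∧
    ¬ ∃ y : ℤ_[5], y ^ 25 = 14 * α - 19 := by
  have hdvd : ∀ x : ℤ_[5], (5:ℤ_[5])^3 ∣ x ↔ PadicInt.toZModPow 3 x = 0 := by
    intro x
    rw [← RingHom.mem_ker, PadicInt.ker_toZModPow, Ideal.mem_span_singleton]
    norm_num
  -- α ≡ 62 mod 125
  have h1 : (PadicInt.toZModPow 3) α ^ 3 + 7 * (PadicInt.toZModPow 3) α - 12 = 0 := by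
    have := congrArg (PadicInt.toZModPow (p := 5) 3) hα
    simpa [map_sub, map_add, map_mul, map_pow, map_ofNat] using this
  have h2 : (PadicInt.toZModPow 3) α = 62 := by
    revert h1
    generalize (PadicInt.toZModPow (p := 5) 3) α = b
    revert b
    decide
  have key : (5:ℤ_[5])^3 ∣ α - 62 := by
    rw [hdvd]
    rw [map_sub, h2, map_ofNat]
    decide
  obtain ⟨c, hc⟩ := key
  have hα' : α = 5^3 * c + 62 := by rw [← hc]; ring
  refine ⟨⟨70 * c + 34, by rw [hα']; ring⟩, ?_, ?_, ?_⟩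
  · rintro ⟨d, hd⟩
    have h850 : (5:ℤ_[5])^3 ∣ 850 := by
      refine ⟨d - 14 * c, ?_⟩
      have : (850 : ℤ_[5]) = (14 * α - 19 - (-1)) - 5^3 * (14 * c) := by rw [hα']; ring
      rw [this, hd]; ring
    rw [hdvd] at h850
    have hne : ((850 : ZMod (5^3))) ≠ 0 := by decide
    apply hne
    rw [← h850, map_ofNat]
  · -- fifth root via Hensel
    have hnorm : ‖(Polynomial.X^5 - Polynomial.C (14 * α - 19) : Polynomial ℤ_[5]).eval 19‖ <
        ‖(Polynomial.X^5 - Polynomial.C (14 * α - 19) : Polynomial ℤ_[5]).derivative.eval 19‖ ^ 2 := by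
      have he : (Polynomial.X^5 - Polynomial.C (14 * α - 19) : Polynomial ℤ_[5]).eval 19
          = 19^5 - (14 * α - 19) := by simp
      have hd : (Polynomial.X^5 - Polynomial.C (14 * α - 19) : Polynomial ℤ_[5]).derivative.eval 19
          = 5 * 19^4 := by
        simp [Polynomial.derivative_pow]
      rw [he, hd]
      have hle : ‖(19:ℤ_[5])^5 - (14 * α - 19)‖ ≤ ((5:ℕ):ℝ) ^ (-(3:ℕ) : ℤ) := by
        rw [PadicInt.norm_le_pow_iff_mem_span_pow, Ideal.mem_span_singleton]
        refine ⟨19802 - 14 * c, ?_⟩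
        rw [hα']
        push_cast
        ring
      have h19 : ‖(19:ℤ_[5])‖ = 1 := by
        apply le_antisymm (PadicInt.norm_le_one _)
        by_contra h
        push_neg at h
        have h' : ‖((19:ℤ):ℤ_[5])‖ < 1 := by push_cast; exact h
        rw [PadicInt.norm_int_lt_one_iff_dvd] at h'
        norm_num at h'
      have hd5 : ‖(5:ℤ_[5]) * 19^4‖ = 5⁻¹ := by
        rw [norm_mul, norm_pow, h19,
          show (5:ℤ_[5]) = ((5:ℕ):ℤ_[5]) by norm_num, PadicInt.norm_p]
        norm_num
      rw [hd5]
      refine lt_of_le_of_lt hle ?_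
      norm_num
    obtain ⟨z, hz, -⟩ := hensels_lemma hnorm
    refine ⟨z, ?_⟩
    simpa [sub_eq_zero] using hz
  · rintro ⟨y, hy⟩
    have hcongr := congrArg (PadicInt.toZModPow (p := 5) 3) hy
    rw [map_pow, map_sub, map_mul, h2, map_ofNat, map_ofNat] at hcongr
    exact absurd ⟨_, hcongr⟩ (by decide : ¬ ∃ z : ZMod (5^3), z ^ 25 = 14 * 62 - 19)
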